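/- Let P be a finite set of ports. (i) For every fPCL formula ζ over P there effectively exists an fPCL formula ζ' in normal form with ζ ≡ ζ' (equivalence over every De Morgan algebra). (ii) For every Kleene algebra K and every fPCL formula ζ over P there effectively exists an fPCL formula ζ' in normal form with ζ ≡_K ζ'. (iii) For every Boolean algebra B and every fPCL formula ζ over P there effectively exists an fPCL formula ζ' in normal form with ζ ≡_B ζ'. -/
import Mathlib


/-- A De Morgan algebra: a bounded distributive lattice equipped with a
complement map satisfying involution and the De Morgan laws. -/
class DeMorganAlg (K : Type) extends DistribLattice K, BoundedOrder K where
  compl : K → K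
  compl_compl : ∀ k : K, compl (compl k) = k
  compl_sup : ∀ k k' : K, compl (k ⊔ k') = compl k ⊓ compl k'
  compl_inf : ∀ k k' : K, compl (k ⊓ k') = compl k ⊔ compl k'

/-- fPIL formulas over the set of ports `P`. -/
inductive fPIL (P : Type) : Type where
  | tt : fPIL P
  | port : P → fPIL P
  | fnot : fPIL P → fPIL P
  | fdisj : fPIL P → fPIL P → fPIL P

/-- Fuzzy conjunction of fPIL formulas. -/
def fPIL.fconj {P : Type} (φ₁ φ₂ : fPIL P) : fPIL P :=
  .fnot (.fdisj (.fnot φ₁) (.fnot φ₂))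

/-- The fPIL formula `false`. -/
def fPIL.ff {P : Type} : fPIL P := .fnot .tt

/-- K-fuzzy interactions on `P`: maps `a : P → K` with `a p ≠ 0` for some port `p`. -/
def fI (P K : Type) [DeMorganAlg K] : Type := {a : P → K // ∃ p : P, a p ≠ ⊥}

/-- Semantics of fPIL formulas. -/
def fPIL.sem {P K : Type} [DeMorganAlg K] : fPIL P → fI P K → K
  | .tt, _ => ⊤
  | .port p, a => a.1 p
  | .fnot φ, a => DeMorganAlg.compl (φ.sem a)
  | .fdisj φ₁ φ₂, a => φ₁.sem a ⊔ φ₂.sem a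

/-- Equivalence of fPIL formulas: equal semantics over every De Morgan algebra
and every fuzzy interaction. -/
def pilEquiv {P : Type} (φ₁ φ₂ : fPIL P) : Prop :=
  ∀ (K : Type) [DeMorganAlg K] (a : fI P K), φ₁.sem a = φ₂.sem a
noncomputable instance {P K : Type} [DeMorganAlg K] : DecidableEq (fI P K) :=
  Classical.decEq _

/-- fPCL formulas over the set of ports `P`. -/
inductive fPCL (P : Type) : Type where
  | pil : fPIL P → fPCL P
  | cneg : fPCL P → fPCL P
  | oplus : fPCL P → fPCL P → fPCL P
  | coal : fPCL P → fPCL P → fPCL P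

/-- Fuzzy conjunction `⊗` of fPCL formulas. -/
def fPCL.otimes {P : Type} (ζ₁ ζ₂ : fPCL P) : fPCL P :=
  .cneg (.oplus (.cneg ζ₁) (.cneg ζ₂))

/-- The closure operator `~ζ := ζ ⊎ true`. -/
def fPCL.closure {P : Type} (ζ : fPCL P) : fPCL P := .coal ζ (.pil .tt)

/-- Semantics of fPCL formulas on finite sets of fuzzy interactions. -/
noncomputable def fPCL.sem {P K : Type} [DeMorganAlg K] :
    fPCL P → Finset (fI P K) → K
  | .pil φ, γ => γ.inf fun a => φ.sem a
  | .cneg ζ, γ => DeMorganAlg.compl (ζ.sem γ)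
  | .oplus ζ₁ ζ₂, γ => ζ₁.sem γ ⊔ ζ₂.sem γ
  | .coal ζ₁ ζ₂, γ =>
      ((γ.powerset ×ˢ γ.powerset).filter fun q =>
          q.1.Nonempty ∧ q.2.Nonempty ∧ q.1 ∪ q.2 = γ).sup fun q =>
        ζ₁.sem q.1 ⊓ ζ₂.sem q.2

/-- Equivalence of fPCL formulas: equal semantics over every De Morgan algebra
and every nonempty finite set of fuzzy interactions. -/
def pclEquiv {P : Type} (ζ₁ ζ₂ : fPCL P) : Prop :=
  ∀ (K : Type) [DeMorganAlg K] (γ : Finset (fI P K)), γ.Nonempty →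
    ζ₁.sem γ = ζ₂.sem γ
/-- A Kleene algebra: a De Morgan algebra satisfying `k₁ ⊓ k̄₁ ≤ k₂ ⊔ k̄₂`. -/
class KleeneAlg (K : Type) extends DeMorganAlg K where
  inf_compl_le_sup_compl : ∀ k₁ k₂ : K, k₁ ⊓ compl k₁ ≤ k₂ ⊔ compl k₂

/-- A Boolean algebra: a Kleene algebra with `k ⊓ k̄ = 0` and `k ⊔ k̄ = 1`. -/
class BooleanDMAlg (K : Type) extends KleeneAlg K where
  inf_compl_self : ∀ k : K, k ⊓ compl k = ⊥
  sup_compl_self : ∀ k : K, k ⊔ compl k = ⊤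

/-- Equivalence of fPCL formulas over the concrete De Morgan algebra `K`. -/
def pclEquivAt (K : Type) [DeMorganAlg K] {P : Type} (ζ₁ ζ₂ : fPCL P) : Prop :=
  ∀ γ : Finset (fI P K), γ.Nonempty → ζ₁.sem γ = ζ₂.sem γ

/-- Iterated fuzzy conjunction of a nonempty list `φ :: l` of fPIL formulas. -/
def fPIL.foldConj {P : Type} : fPIL P → List (fPIL P) → fPIL P
  | φ, [] => φ
  | φ, ψ :: l => fPIL.fconj φ (fPIL.foldConj ψ l)

/-- Iterated fuzzy disjunction of a nonempty list `φ :: l` of fPIL formulas. -/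
def fPIL.foldDisj {P : Type} : fPIL P → List (fPIL P) → fPIL P
  | φ, [] => φ
  | φ, ψ :: l => fPIL.fdisj φ (fPIL.foldDisj ψ l)

/-- Iterated coalescing of a nonempty list `ζ :: l` of fPCL formulas. -/
def fPCL.foldCoal {P : Type} : fPCL P → List (fPCL P) → fPCL P
  | ζ, [] => ζ
  | ζ, ζ' :: l => fPCL.coal ζ (fPCL.foldCoal ζ' l)

/-- Iterated fuzzy disjunction of a nonempty list `ζ :: l` of fPCL formulas. -/
def fPCL.foldOplus {P : Type} : fPCL P → List (fPCL P) → fPCL P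
  | ζ, [] => ζ
  | ζ, ζ' :: l => fPCL.oplus ζ (fPCL.foldOplus ζ' l)

/-- An f-monomial: a formula `(⋀f_{p∈P₁} p) ∧f (⋀f_{p∈P₂} !p)` with
`P₁, P₂ ⊆ P` and `P₁ ∪ P₂ ≠ ∅` (the subsets are given by duplicate-free lists
of ports, positive literals first). -/
def IsFMonomial {P : Type} (φ : fPIL P) : Prop :=
  ∃ (l₁ l₂ : List P) (ψ : fPIL P) (l : List (fPIL P)),
    l₁.Nodup ∧ l₂.Nodup ∧
    l₁.map fPIL.port ++ l₂.map (fun p => fPIL.fnot (fPIL.port p)) = ψ :: l ∧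
    φ = fPIL.foldConj ψ l

/-- An fPIL formula is in fpil-normal form if it is `true`, or `false`, or a
finite fuzzy disjunction of pairwise non-equivalent f-monomials. -/
def IsFpilNF {P : Type} (φ : fPIL P) : Prop :=
  φ = fPIL.tt ∨ φ = fPIL.ff ∨
    ∃ (ψ : fPIL P) (l : List (fPIL P)),
      (∀ χ ∈ ψ :: l, IsFMonomial χ) ∧
      (ψ :: l).Pairwise (fun χ₁ χ₂ => ¬ pilEquiv χ₁ χ₂) ∧
      φ = fPIL.foldDisj ψ l

/-- The fPCL formula `⊎_{j∈J_i} φ_{i,j}` associated with a (nonempty) block of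
fPIL formulas. -/
def blockF {P : Type} (b : fPIL P × List (fPIL P)) : fPCL P :=
  fPCL.foldCoal (.pil b.1) (b.2.map fPCL.pil)

/-- An fPCL formula is in normal form if it is `true`, or `false`, or of the
form `⊕_{i∈I} ⊎_{j∈J_i} φ_{i,j}` with `I` and each `J_i` finite and nonempty,
each `φ_{i,j}` in fpil-normal form and not equivalent to `false`, the `φ_{i,j}`
pairwise non-equivalent within each block, and the coalesced blocks pairwise
non-equivalent. -/
def IsNormalForm {P : Type} (ζ : fPCL P) : Prop :=
  ζ = fPCL.pil fPIL.tt ∨ ζ = fPCL.pil fPIL.ff ∨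
    ∃ (B : fPIL P × List (fPIL P)) (L : List (fPIL P × List (fPIL P))),
      (∀ b ∈ B :: L, ∀ φ ∈ b.1 :: b.2,
        IsFpilNF φ ∧ ¬ pclEquiv (fPCL.pil φ) (fPCL.pil fPIL.ff)) ∧
      (∀ b ∈ B :: L,
        (b.1 :: b.2).Pairwise fun φ₁ φ₂ =>
          ¬ pclEquiv (fPCL.pil φ₁) (fPCL.pil φ₂)) ∧
      ((B :: L).Pairwise fun b₁ b₂ => ¬ pclEquiv (blockF b₁) (blockF b₂)) ∧
      ζ = fPCL.foldOplus (blockF B) (L.map blockF)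

section NFDev


variable {P : Type} {K : Type} [DeMorganAlg K]

local notation "cpl" => (DeMorganAlg.compl : K → K)

lemma cpl_le_cpl {x y : K} (h : x ≤ y) : cpl y ≤ cpl x := by
  have h2 : (DeMorganAlg.compl (x ⊔ y) : K) = cpl x ⊓ cpl y := DeMorganAlg.compl_sup x y
  rw [sup_eq_right.mpr h] at h2
  rw [h2]; exact inf_le_left

lemma cpl_top : cpl (⊤ : K) = ⊥ := by
  have h := cpl_le_cpl (le_top (a := (DeMorganAlg.compl (⊥ : K))))
  rw [DeMorganAlg.compl_compl] at h
  exact le_antisymm h bot_le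

lemma cpl_bot : cpl (⊥ : K) = ⊤ := by
  rw [← cpl_top, DeMorganAlg.compl_compl]

lemma cpl_finsetInf {β : Type} (s : Finset β) (f : β → K) :
    cpl (s.inf f) = s.sup (fun b => cpl (f b)) := by
  induction s using Finset.cons_induction with
  | empty => simp [cpl_top]
  | cons a s ha ih => simp [Finset.inf_cons, Finset.sup_cons, DeMorganAlg.compl_inf, ih]

lemma cpl_finsetSup {β : Type} (s : Finset β) (f : β → K) :
    cpl (s.sup f) = s.inf (fun b => cpl (f b)) := by
  induction s using Finset.cons_induction with
  | empty => simp [cpl_bot]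
  | cons a s ha ih => simp [Finset.sup_cons, Finset.inf_cons, DeMorganAlg.compl_sup, ih]

/-! ### list lattice helpers -/

def lsup : List K → K := fun l => l.foldr (· ⊔ ·) ⊥
def linf : List K → K := fun l => l.foldr (· ⊓ ·) ⊤

@[simp] lemma lsup_nil : lsup ([] : List K) = ⊥ := rfl
@[simp] lemma lsup_cons (x : K) (l : List K) : lsup (x :: l) = x ⊔ lsup l := rfl
@[simp] lemma linf_nil : linf ([] : List K) = ⊤ := rfl
@[simp] lemma linf_cons (x : K) (l : List K) : linf (x :: l) = x ⊓ linf l := rfl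

lemma lsup_append (l m : List K) : lsup (l ++ m) = lsup l ⊔ lsup m := by
  induction l with
  | nil => simp
  | cons x l ih => simp [ih, sup_assoc]

lemma linf_append (l m : List K) : linf (l ++ m) = linf l ⊓ linf m := by
  induction l with
  | nil => simp
  | cons x l ih => simp [ih, inf_assoc]

lemma le_lsup {l : List K} {x : K} (h : x ∈ l) : x ≤ lsup l := by
  induction l with
  | nil => simp at h
  | cons y l ih =>
    rcases List.mem_cons.mp h with h | h
    · subst h; exact le_sup_left
    · exact le_trans (ih h) le_sup_right

lemma lsup_le {l : List K} {x : K} (h : ∀ y ∈ l, y ≤ x) : lsup l ≤ x := by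
  induction l with
  | nil => simp
  | cons y l ih =>
    simp only [lsup_cons, sup_le_iff]
    exact ⟨h y (by simp), ih fun z hz => h z (by simp [hz])⟩

lemma linf_le {l : List K} {x : K} (h : x ∈ l) : linf l ≤ x := by
  induction l with
  | nil => simp at h
  | cons y l ih =>
    rcases List.mem_cons.mp h with h | h
    · subst h; exact inf_le_left
    · exact le_trans inf_le_right (ih h)

lemma le_linf {l : List K} {x : K} (h : ∀ y ∈ l, x ≤ y) : x ≤ linf l := by
  induction l with
  | nil => simp
  | cons y l ih =>
    simp only [linf_cons, le_inf_iff]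
    exact ⟨h y (by simp), ih fun z hz => h z (by simp [hz])⟩

lemma lsup_eq_of_dom {l m : List K}
    (h1 : ∀ x ∈ l, ∃ y ∈ m, x ≤ y) (h2 : ∀ y ∈ m, ∃ x ∈ l, y ≤ x) :
    lsup l = lsup m := by
  apply le_antisymm
  · exact lsup_le fun x hx => by
      obtain ⟨y, hy, hxy⟩ := h1 x hx; exact le_trans hxy (le_lsup hy)
  · exact lsup_le fun y hy => by
      obtain ⟨x, hx, hxy⟩ := h2 y hy; exact le_trans hxy (le_lsup hx)

lemma inf_lsup (x : K) (l : List K) : x ⊓ lsup l = lsup (l.map (x ⊓ ·)) := by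
  induction l with
  | nil => simp
  | cons y l ih => simp [inf_sup_left, ih]

lemma lsup_prod {α β : Type} (A : List α) (B : List β) (f : α → K) (g : β → K) :
    lsup (A.map f) ⊓ lsup (B.map g)
      = lsup ((A.product B).map fun q => f q.1 ⊓ g q.2) := by
  induction A with
  | nil => simp [List.product]
  | cons a A ih =>
    have hprod : (a :: A).product B = B.map (fun b => (a, b)) ++ A.product B := by
      simp [List.product]
    rw [hprod, List.map_append, lsup_append, List.map_cons, lsup_cons,
      inf_sup_right, ih, List.map_map]
    congr 1
    rw [inf_lsup, List.map_map]
    rfl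

lemma guard_linf (x : K) {α : Type} (l : List α) (F G : α → K)
    (h : ∀ w ∈ l, x ⊓ F w = x ⊓ G w) :
    x ⊓ linf (l.map F) = x ⊓ linf (l.map G) := by
  induction l with
  | nil => simp
  | cons w l ih =>
    simp only [List.map_cons, linf_cons]
    rw [inf_inf_distrib_left x (F w), inf_inf_distrib_left x (G w),
      h w (by simp), ih fun z hz => h z (by simp [hz])]

end NFDev
section NFDev2

variable {P : Type} {K : Type} [DeMorganAlg K]

local notation "cpl" => (DeMorganAlg.compl : K → K)

/-! ### Iv / Sv -/

def Iv (φ : fPIL P) (γ : Finset (fI P K)) : K := γ.inf (fun a => φ.sem a)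
def Sv (φ : fPIL P) (γ : Finset (fI P K)) : K := γ.sup (fun a => φ.sem a)

lemma Iv_le {φ : fPIL P} {γ : Finset (fI P K)} {a : fI P K} (h : a ∈ γ) :
    Iv φ γ ≤ φ.sem a := Finset.inf_le h

lemma le_Iv {φ : fPIL P} {γ : Finset (fI P K)} {x : K}
    (h : ∀ a ∈ γ, x ≤ φ.sem a) : x ≤ Iv φ γ := Finset.le_inf h

lemma le_Sv {φ : fPIL P} {γ : Finset (fI P K)} {a : fI P K} (h : a ∈ γ) :
    φ.sem a ≤ Sv φ γ := Finset.le_sup h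

lemma Sv_le {φ : fPIL P} {γ : Finset (fI P K)} {x : K}
    (h : ∀ a ∈ γ, φ.sem a ≤ x) : Sv φ γ ≤ x := Finset.sup_le h

lemma Iv_le_Sv {φ : fPIL P} {γ : Finset (fI P K)} (h : γ.Nonempty) :
    Iv φ γ ≤ Sv φ γ := by
  obtain ⟨a, ha⟩ := h
  exact le_trans (Iv_le ha) (le_Sv ha)

lemma Sv_mono_set {φ : fPIL P} {γ₁ γ₂ : Finset (fI P K)} (h : γ₁ ⊆ γ₂) :
    Sv φ γ₁ ≤ Sv φ γ₂ := Finset.sup_mono h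

lemma Iv_mono_fun {φ ψ : fPIL P} {γ : Finset (fI P K)}
    (h : ∀ a : fI P K, φ.sem a ≤ ψ.sem a) : Iv φ γ ≤ Iv ψ γ :=
  Finset.inf_mono_fun fun a _ => h a

lemma Sv_mono_fun {φ ψ : fPIL P} {γ : Finset (fI P K)}
    (h : ∀ a : fI P K, φ.sem a ≤ ψ.sem a) : Sv φ γ ≤ Sv ψ γ :=
  Finset.sup_mono_fun fun a _ => h a

lemma Iv_congr {φ ψ : fPIL P} {γ : Finset (fI P K)}
    (h : ∀ a : fI P K, φ.sem a = ψ.sem a) : Iv φ γ = Iv ψ γ := by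
  unfold Iv; exact Finset.inf_congr rfl fun a _ => h a

lemma Sv_congr {φ ψ : fPIL P} {γ : Finset (fI P K)}
    (h : ∀ a : fI P K, φ.sem a = ψ.sem a) : Sv φ γ = Sv ψ γ := by
  unfold Sv; exact Finset.sup_congr rfl fun a _ => h a

/-! ### pointwise semantics -/

@[simp] lemma sem_tt (a : fI P K) : (fPIL.tt : fPIL P).sem a = ⊤ := rfl

@[simp] lemma sem_fnot (φ : fPIL P) (a : fI P K) :
    (fPIL.fnot φ).sem a = cpl (φ.sem a) := rfl

@[simp] lemma sem_fdisj (φ ψ : fPIL P) (a : fI P K) :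
    (fPIL.fdisj φ ψ).sem a = φ.sem a ⊔ ψ.sem a := rfl

@[simp] lemma sem_fconj (φ ψ : fPIL P) (a : fI P K) :
    (fPIL.fconj φ ψ).sem a = φ.sem a ⊓ ψ.sem a := by
  simp [fPIL.fconj, DeMorganAlg.compl_sup, DeMorganAlg.compl_compl]

@[simp] lemma sem_ff (a : fI P K) : (fPIL.ff : fPIL P).sem a = ⊥ := by
  simp [fPIL.ff, cpl_top]

lemma sem_foldDisj (ψ : fPIL P) (l : List (fPIL P)) (a : fI P K) :
    (fPIL.foldDisj ψ l).sem a = lsup ((ψ :: l).map (fun χ => χ.sem a)) := by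
  induction l generalizing ψ with
  | nil => simp [fPIL.foldDisj]
  | cons χ l ih => simp [fPIL.foldDisj, ih χ]

lemma sem_foldConj (ψ : fPIL P) (l : List (fPIL P)) (a : fI P K) :
    (fPIL.foldConj ψ l).sem a = linf ((ψ :: l).map (fun χ => χ.sem a)) := by
  induction l generalizing ψ with
  | nil => simp [fPIL.foldConj]
  | cons χ l ih => simp [fPIL.foldConj, ih χ]

/-! ### the powerset distribution law -/

lemma inf_sup_powerset (γ : Finset (fI P K)) (f g : fI P K → K) :
    (γ.inf fun a => f a ⊔ g a)
      = γ.powerset.sup (fun t => t.inf f ⊓ (γ \ t).inf g) := by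
  induction γ using Finset.induction_on with
  | empty => simp
  | @insert a s ha ih =>
    rw [Finset.inf_insert, ih, Finset.powerset_insert, Finset.sup_union,
      Finset.sup_image, inf_sup_right,
      Finset.sup_inf_distrib_left s.powerset _ (f a),
      Finset.sup_inf_distrib_left s.powerset _ (g a), sup_comm]
    congr 1
    · -- g a branch matches plain powerset part
      apply Finset.sup_congr rfl
      intro t ht
      rw [Finset.mem_powerset] at ht
      have hat : a ∉ t := fun h => ha (ht h)
      have hins : insert a s \ t = insert a (s \ t) := by
        ext x
        simp only [Finset.mem_sdiff, Finset.mem_insert]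
        constructor
        · rintro ⟨h1 | h1, h2⟩
          · exact Or.inl h1
          · exact Or.inr ⟨h1, h2⟩
        · rintro (h1 | ⟨h1, h2⟩)
          · exact ⟨Or.inl h1, fun hx => hat (h1 ▸ hx)⟩
          · exact ⟨Or.inr h1, h2⟩
      rw [hins, Finset.inf_insert]
      ac_rfl
    · -- f a branch matches image part
      apply Finset.sup_congr rfl
      intro t ht
      rw [Finset.mem_powerset] at ht
      have hat : a ∉ t := fun h => ha (ht h)
      have h2 : insert a s \ insert a t = s \ t := by
        ext x
        simp only [Finset.mem_sdiff, Finset.mem_insert, not_or]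
        constructor
        · rintro ⟨h1 | h1, h2, h3⟩
          · exact absurd h1 h2
          · exact ⟨h1, h3⟩
        · rintro ⟨h1, h2⟩
          exact ⟨Or.inr h1, fun hx => ha (hx ▸ h1), h2⟩
      show f a ⊓ (t.inf f ⊓ (s \ t).inf g) = (insert a t).inf f ⊓ (insert a s \ insert a t).inf g
      rw [Finset.inf_insert, h2]
      ac_rfl

end NFDev2
abbrev Item (P : Type) : Type := fPIL P × List (fPIL P)

/-- combination of items corresponding to coalescing -/
def coalC {P : Type} (i j : Item P) : Item P :=
  (fPIL.fdisj i.1 j.1,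
    i.1 :: j.1 :: (i.2.map (fPIL.fconj i.1) ++ j.2.map (fPIL.fconj j.1)))

section NFDev3

variable {P : Type} {K : Type} [DeMorganAlg K]

lemma Iv_def (φ : fPIL P) (γ : Finset (fI P K)) :
    Iv φ γ = γ.inf (fun a => φ.sem a) := rfl
lemma Sv_def (φ : fPIL P) (γ : Finset (fI P K)) :
    Sv φ γ = γ.sup (fun a => φ.sem a) := rfl

noncomputable def covers (γ : Finset (fI P K)) :
    Finset (Finset (fI P K) × Finset (fI P K)) :=
  (γ.powerset ×ˢ γ.powerset).filter fun q =>
    q.1.Nonempty ∧ q.2.Nonempty ∧ q.1 ∪ q.2 = γ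

lemma sem_coal (ζ₁ ζ₂ : fPCL P) (γ : Finset (fI P K)) :
    (fPCL.coal ζ₁ ζ₂).sem γ
      = (covers γ).sup (fun q => ζ₁.sem q.1 ⊓ ζ₂.sem q.2) := rfl

lemma mem_covers {γ : Finset (fI P K)} {q : Finset (fI P K) × Finset (fI P K)} :
    q ∈ covers γ ↔ q.1.Nonempty ∧ q.2.Nonempty ∧ q.1 ∪ q.2 = γ := by
  simp only [covers, Finset.mem_filter, Finset.mem_product, Finset.mem_powerset]
  constructor
  · rintro ⟨_, h⟩; exact h
  · rintro ⟨h1, h2, h3⟩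
    exact ⟨⟨h3 ▸ Finset.subset_union_left, h3 ▸ Finset.subset_union_right⟩,
      h1, h2, h3⟩

def itemSem (i : Item P) (γ : Finset (fI P K)) : K :=
  Iv i.1 γ ⊓ linf (i.2.map fun w => Sv (fPIL.fconj i.1 w) γ)

lemma iv_inf_sv (α β : fPIL P) (γ : Finset (fI P K)) :
    Iv α γ ⊓ Sv β γ = Iv α γ ⊓ Sv (α.fconj β) γ := by
  apply le_antisymm
  · refine le_inf inf_le_left ?_
    have hdist : Iv α γ ⊓ Sv β γ = γ.sup (fun b => Iv α γ ⊓ β.sem b) :=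
      Finset.sup_inf_distrib_left γ _ _
    rw [hdist]
    apply Finset.sup_le
    intro b hb
    refine le_trans ?_ (le_Sv hb)
    rw [sem_fconj]
    exact inf_le_inf_right _ (Iv_le hb)
  · exact inf_le_inf_left _ (Sv_mono_fun fun a => by
      rw [sem_fconj]; exact inf_le_right)

lemma sup_pull {β : Type} (s : Finset β) (f : β → K) (x y : K) :
    x ⊓ (s.sup f ⊓ y) = s.sup fun b => f b ⊓ (x ⊓ y) := by
  rw [show x ⊓ (s.sup f ⊓ y) = s.sup f ⊓ (x ⊓ y) by ac_rfl,
    Finset.sup_inf_distrib_right]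

/-- The routing lemma. -/
lemma route (γ : Finset (fI P K)) :
    ∀ (l : List (fPIL P)) (D : fPIL P),
      (∀ φ ∈ l, ∀ a : fI P K, φ.sem a ≤ D.sem a) →
      ∀ (δ : Finset (fI P K)), δ.Nonempty → δ ⊆ γ →
      Iv D δ ⊓ linf (l.map fun φ => Sv φ γ) ≤
        (γ.powerset.filter fun δ' => δ ⊆ δ' ∧ δ'.Nonempty).sup
          (fun δ' => Iv D δ' ⊓ linf (l.map fun φ => Sv φ δ')) := by
  intro l
  induction l with
  | nil =>
    intro D _ δ hne hsub
    exact Finset.le_sup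
      (f := fun δ' => Iv D δ' ⊓ linf (List.map (fun φ => Sv φ δ') []))
      (by
        rw [Finset.mem_filter, Finset.mem_powerset]
        exact ⟨hsub, Finset.Subset.refl δ, hne⟩)
  | cons φ l ih =>
    intro D hl δ hne hsub
    have hl' : ∀ ψ ∈ l, ∀ a : fI P K, ψ.sem a ≤ D.sem a :=
      fun ψ h => hl ψ (by simp [h])
    have hre : Iv D δ ⊓ linf ((φ :: l).map fun ψ => Sv ψ γ)
        = γ.sup (fun b => φ.sem b ⊓ (Iv D δ ⊓ linf (l.map fun ψ => Sv ψ γ))) := by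
      rw [List.map_cons, linf_cons, Sv_def, sup_pull]
    rw [hre]
    apply Finset.sup_le
    intro b hb
    have hDb : φ.sem b ⊓ Iv D δ ≤ Iv D (insert b δ) := by
      show φ.sem b ⊓ Iv D δ ≤ (insert b δ).inf fun a => D.sem a
      rw [Finset.inf_insert]
      exact inf_le_inf (hl φ (by simp) b) le_rfl
    have h1 : φ.sem b ⊓ (Iv D δ ⊓ linf (l.map fun ψ => Sv ψ γ))
        ≤ φ.sem b ⊓ (Iv D (insert b δ) ⊓ linf (l.map fun ψ => Sv ψ γ)) := by
      refine le_inf inf_le_left (le_inf (le_trans ?_ hDb)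
        (le_trans inf_le_right inf_le_right))
      exact le_inf inf_le_left (le_trans inf_le_right inf_le_left)
    refine le_trans h1 ?_
    have h2 := ih D hl' (insert b δ) (Finset.insert_nonempty b δ)
      (Finset.insert_subset hb hsub)
    refine le_trans (inf_le_inf_left _ h2) ?_
    rw [Finset.sup_inf_distrib_left]
    apply Finset.sup_le
    intro δ' hδ'
    simp only [Finset.mem_filter, Finset.mem_powerset] at hδ'
    obtain ⟨hδ'γ, hins, hδ'ne⟩ := hδ'
    have hbδ' : b ∈ δ' := hins (Finset.mem_insert_self b δ)
    refine le_trans ?_ (Finset.le_sup (f := fun δ' =>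
        Iv D δ' ⊓ linf ((φ :: l).map fun ψ => Sv ψ δ')) (by
      simp only [Finset.mem_filter, Finset.mem_powerset]
      exact ⟨hδ'γ, Finset.Subset.trans (Finset.subset_insert b δ) hins, hδ'ne⟩))
    simp only [List.map_cons, linf_cons]
    refine le_inf (le_trans inf_le_right inf_le_left)
      (le_inf (le_trans inf_le_left (le_Sv hbδ'))
        (le_trans inf_le_right inf_le_right))

lemma itemSem_coalC (i j : Item P) (γ : Finset (fI P K)) :
    itemSem (coalC i j) γ
      = Iv (fPIL.fdisj i.1 j.1) γ ⊓ (Sv i.1 γ ⊓ (Sv j.1 γ ⊓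
          (linf (i.2.map fun w => Sv (fPIL.fconj i.1 w) γ) ⊓
           linf (j.2.map fun w => Sv (fPIL.fconj j.1 w) γ)))) := by
  obtain ⟨g, ws1⟩ := i; obtain ⟨h, ws2⟩ := j
  show Iv (fPIL.fdisj g h) γ ⊓ _ = _
  have e1 : Sv (fPIL.fconj (fPIL.fdisj g h) g) γ = Sv g γ :=
    Sv_congr fun a => by
      rw [sem_fconj, sem_fdisj, inf_comm, inf_sup_self]
  have e2 : Sv (fPIL.fconj (fPIL.fdisj g h) h) γ = Sv h γ :=
    Sv_congr fun a => by
      rw [sem_fconj, sem_fdisj, inf_comm, sup_comm, inf_sup_self]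
  have e3 : ∀ w : fPIL P,
      Sv (fPIL.fconj (fPIL.fdisj g h) (fPIL.fconj g w)) γ
        = Sv (fPIL.fconj g w) γ := fun w =>
    Sv_congr fun a => by
      rw [sem_fconj, sem_fconj, sem_fdisj]
      exact inf_eq_right.mpr (le_trans inf_le_left le_sup_left)
  have e4 : ∀ w : fPIL P,
      Sv (fPIL.fconj (fPIL.fdisj g h) (fPIL.fconj h w)) γ
        = Sv (fPIL.fconj h w) γ := fun w =>
    Sv_congr fun a => by
      rw [sem_fconj, sem_fconj, sem_fdisj]
      exact inf_eq_right.mpr (le_trans inf_le_left le_sup_right)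
  simp only [itemSem, coalC, List.map_cons, linf_cons, List.map_append,
    linf_append, List.map_map, Function.comp_def, e1, e2, e3, e4]

/-- coalescing two items -/
lemma coalItem (i j : Item P) (γ : Finset (fI P K)) :
    (covers γ).sup (fun q => itemSem i q.1 ⊓ itemSem j q.2)
      = itemSem (coalC i j) γ := by
  obtain ⟨g, ws1⟩ := i; obtain ⟨h, ws2⟩ := j
  rw [itemSem_coalC]
  apply le_antisymm
  · apply Finset.sup_le
    intro q hq
    rw [mem_covers] at hq
    obtain ⟨h1, h2, h3⟩ := hq
    have hq1γ : q.1 ⊆ γ := h3 ▸ Finset.subset_union_left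
    have hq2γ : q.2 ⊆ γ := h3 ▸ Finset.subset_union_right
    have hIl : itemSem (g, ws1) q.1 ⊓ itemSem (h, ws2) q.2 ≤ Iv g q.1 :=
      le_trans inf_le_left inf_le_left
    have hIr : itemSem (g, ws1) q.1 ⊓ itemSem (h, ws2) q.2 ≤ Iv h q.2 :=
      le_trans inf_le_right inf_le_left
    refine le_inf ?_ (le_inf ?_ (le_inf ?_ (le_inf ?_ ?_)))
    · apply le_Iv
      intro a ha
      rw [← h3, Finset.mem_union] at ha
      rcases ha with ha | ha
      · exact le_trans hIl (le_trans (Iv_le ha) (by rw [sem_fdisj]; exact le_sup_left))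
      · exact le_trans hIr (le_trans (Iv_le ha) (by rw [sem_fdisj]; exact le_sup_right))
    · exact le_trans hIl (le_trans (Iv_le_Sv h1) (Sv_mono_set hq1γ))
    · exact le_trans hIr (le_trans (Iv_le_Sv h2) (Sv_mono_set hq2γ))
    · refine le_trans (le_trans inf_le_left inf_le_right) (le_linf ?_)
      intro x hx
      obtain ⟨w, hw, rfl⟩ := List.mem_map.mp hx
      exact le_trans (linf_le (List.mem_map.mpr ⟨w, hw, rfl⟩)) (Sv_mono_set hq1γ)
    · refine le_trans (le_trans inf_le_right inf_le_right) (le_linf ?_)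
      intro x hx
      obtain ⟨w, hw, rfl⟩ := List.mem_map.mp hx
      exact le_trans (linf_le (List.mem_map.mpr ⟨w, hw, rfl⟩)) (Sv_mono_set hq2γ)
  · -- hard direction
    set L1 := linf (ws1.map fun w => Sv (fPIL.fconj g w) γ) with hL1
    set L2 := linf (ws2.map fun w => Sv (fPIL.fconj h w) γ) with hL2
    have hIvsplit : Iv (fPIL.fdisj g h) γ
        = γ.powerset.sup (fun t => Iv g t ⊓ Iv h (γ \ t)) := by
      rw [Iv_def]
      rw [show (fun a : fI P K => (fPIL.fdisj g h).sem a)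
          = fun a => g.sem a ⊔ h.sem a from funext fun a => by rw [sem_fdisj]]
      exact inf_sup_powerset γ _ _
    rw [hIvsplit, Finset.sup_inf_distrib_right]
    apply Finset.sup_le
    intro t ht
    rw [Finset.mem_powerset] at ht
    rw [show Iv g t ⊓ Iv h (γ \ t) ⊓ (Sv g γ ⊓ (Sv h γ ⊓ (L1 ⊓ L2)))
        = Sv g γ ⊓ (Sv h γ ⊓ ((Iv g t ⊓ Iv h (γ \ t)) ⊓ (L1 ⊓ L2))) from by ac_rfl,
      Sv_def g, Finset.sup_inf_distrib_right]
    apply Finset.sup_le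
    intro a1 ha1
    rw [show g.sem a1 ⊓ (Sv h γ ⊓ ((Iv g t ⊓ Iv h (γ \ t)) ⊓ (L1 ⊓ L2)))
        = Sv h γ ⊓ (g.sem a1 ⊓ ((Iv g t ⊓ Iv h (γ \ t)) ⊓ (L1 ⊓ L2))) from by ac_rfl,
      Sv_def h, Finset.sup_inf_distrib_right]
    apply Finset.sup_le
    intro a2 ha2
    have e1 : Iv g (insert a1 t) = g.sem a1 ⊓ Iv g t := by
      show (insert a1 t).inf (fun a => g.sem a) = _
      rw [Finset.inf_insert]; rfl
    have e2 : Iv h (insert a2 (γ \ t)) = h.sem a2 ⊓ Iv h (γ \ t) := by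
      show (insert a2 (γ \ t)).inf (fun a => h.sem a) = _
      rw [Finset.inf_insert]; rfl
    have key1 : h.sem a2 ⊓ (g.sem a1 ⊓ ((Iv g t ⊓ Iv h (γ \ t)) ⊓ (L1 ⊓ L2)))
        ≤ (Iv g (insert a1 t) ⊓ L1) ⊓ (Iv h (insert a2 (γ \ t)) ⊓ L2) := by
      rw [e1, e2]
      exact le_of_eq (by ac_rfl)
    refine le_trans key1 ?_
    have hroute1 := route γ (ws1.map (fPIL.fconj g)) g
      (by
        intro φ hφ a
        obtain ⟨w, hw, rfl⟩ := List.mem_map.mp hφ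
        rw [sem_fconj]; exact inf_le_left)
      (insert a1 t) (Finset.insert_nonempty a1 t)
      (Finset.insert_subset ha1 ht)
    have hroute2 := route γ (ws2.map (fPIL.fconj h)) h
      (by
        intro φ hφ a
        obtain ⟨w, hw, rfl⟩ := List.mem_map.mp hφ
        rw [sem_fconj]; exact inf_le_left)
      (insert a2 (γ \ t)) (Finset.insert_nonempty a2 (γ \ t))
      (Finset.insert_subset ha2 (Finset.sdiff_subset))
    simp only [List.map_map, Function.comp_def] at hroute1 hroute2
    refine le_trans (inf_le_inf hroute1 hroute2) ?_
    rw [Finset.sup_inf_distrib_right]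
    apply Finset.sup_le
    intro δ1 hδ1
    simp only [Finset.mem_filter, Finset.mem_powerset] at hδ1
    obtain ⟨hδ1γ, hδ1sup, hδ1ne⟩ := hδ1
    rw [Finset.sup_inf_distrib_left]
    apply Finset.sup_le
    intro δ2 hδ2
    simp only [Finset.mem_filter, Finset.mem_powerset] at hδ2
    obtain ⟨hδ2γ, hδ2sup, hδ2ne⟩ := hδ2
    have hmem : (δ1, δ2) ∈ covers γ := by
      rw [mem_covers]
      refine ⟨hδ1ne, hδ2ne, ?_⟩
      apply Finset.Subset.antisymm (Finset.union_subset hδ1γ hδ2γ)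
      intro x hx
      by_cases hxt : x ∈ t
      · exact Finset.mem_union_left _
          (hδ1sup (Finset.mem_insert_of_mem hxt))
      · exact Finset.mem_union_right _
          (hδ2sup (Finset.mem_insert_of_mem (Finset.mem_sdiff.mpr ⟨hx, hxt⟩)))
    exact le_trans (le_of_eq (by simp only [itemSem]))
      (Finset.le_sup (f := fun q => itemSem (g, ws1) q.1 ⊓ itemSem (h, ws2) q.2) hmem)

end NFDev3
def andC {P : Type} (i j : Item P) : Item P := (fPIL.fconj i.1 j.1, i.2 ++ j.2)

def negItem {P : Type} (i : Item P) : List (Item P) :=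
  (fPIL.tt, [i.1.fnot]) :: i.2.map (fun w => ((fPIL.fconj i.1 w).fnot, []))

def prodNeg {P : Type} : List (Item P) → List (Item P)
  | [] => [(fPIL.tt, [])]
  | i :: L => ((negItem i).product (prodNeg L)).map fun q => andC q.1 q.2

lemma product_ne_nil {α β : Type} {A : List α} {B : List β}
    (hA : A ≠ []) (hB : B ≠ []) : A.product B ≠ [] := by
  intro h
  have := List.length_product A B
  rw [show A ×ˢ B = A.product B from rfl, h] at this
  simp only [List.length_nil] at this
  rcases Nat.mul_eq_zero.mp this.symm with h' | h'
  · exact hA (List.length_eq_zero_iff.mp h')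
  · exact hB (List.length_eq_zero_iff.mp h')

lemma prodNeg_ne_nil {P : Type} : ∀ L : List (Item P), prodNeg L ≠ []
  | [] => by simp [prodNeg]
  | i :: L => by
    simp only [prodNeg, ne_eq, List.map_eq_nil_iff]
    exact product_ne_nil (by simp [negItem]) (prodNeg_ne_nil L)

section NFDev4

variable {P : Type} {K : Type} [DeMorganAlg K]

local notation "cpl" => (DeMorganAlg.compl : K → K)

lemma cpl_linf (l : List K) : cpl (linf l) = lsup (l.map fun x => cpl x) := by
  induction l with
  | nil => simp [cpl_top]
  | cons x l ih => simp [DeMorganAlg.compl_inf, ih]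

lemma cpl_lsup (l : List K) : cpl (lsup l) = linf (l.map fun x => cpl x) := by
  induction l with
  | nil => simp [cpl_bot]
  | cons x l ih => simp [DeMorganAlg.compl_sup, ih]

lemma Iv_tt (γ : Finset (fI P K)) : Iv fPIL.tt γ = ⊤ :=
  le_antisymm le_top (le_Iv fun a _ => le_top)

lemma Iv_fconj (α β : fPIL P) (γ : Finset (fI P K)) :
    Iv (fPIL.fconj α β) γ = Iv α γ ⊓ Iv β γ := by
  apply le_antisymm
  · exact le_inf (Iv_mono_fun fun a => by rw [sem_fconj]; exact inf_le_left)
      (Iv_mono_fun fun a => by rw [sem_fconj]; exact inf_le_right)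
  · apply le_Iv
    intro a ha
    rw [sem_fconj]
    exact inf_le_inf (Iv_le ha) (Iv_le ha)

lemma itemSem_and (i j : Item P) (γ : Finset (fI P K)) :
    itemSem (andC i j) γ = itemSem i γ ⊓ itemSem j γ := by
  obtain ⟨g, ws1⟩ := i; obtain ⟨h, ws2⟩ := j
  have key : ∀ (gg : fPIL P) (ws : List (fPIL P)),
      (∀ a : fI P K, g.sem a ⊓ h.sem a ≤ gg.sem a) →
      Iv (fPIL.fconj g h) γ ⊓ linf (ws.map fun w => Sv (fPIL.fconj (fPIL.fconj g h) w) γ)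
        = Iv (fPIL.fconj g h) γ ⊓ linf (ws.map fun w => Sv (fPIL.fconj gg w) γ) := by
    intro gg ws hgg
    apply guard_linf
    intro w _
    apply le_antisymm
    · exact le_inf inf_le_left (le_trans inf_le_right
        (Sv_mono_fun fun a => by
          simp only [sem_fconj]; exact inf_le_inf (hgg a) le_rfl))
    · rw [iv_inf_sv]
      exact le_inf inf_le_left (le_trans inf_le_right
        (Sv_mono_fun fun a => by
          simp only [sem_fconj]; exact inf_le_inf le_rfl inf_le_right))
  show Iv (fPIL.fconj g h) γ ⊓
      linf ((ws1 ++ ws2).map fun w => Sv (fPIL.fconj (fPIL.fconj g h) w) γ) = _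
  rw [List.map_append, linf_append, inf_inf_distrib_left,
    key g ws1 (fun a => inf_le_left),
    key h ws2 (fun a => inf_le_right), Iv_fconj]
  show Iv g γ ⊓ Iv h γ ⊓ linf (ws1.map fun w => Sv (fPIL.fconj g w) γ) ⊓
      (Iv g γ ⊓ Iv h γ ⊓ linf (ws2.map fun w => Sv (fPIL.fconj h w) γ)) = _
  apply le_antisymm
  · refine le_inf (le_inf ?_ ?_) (le_inf ?_ ?_)
    · exact le_trans inf_le_left (le_trans inf_le_left inf_le_left)
    · exact le_trans inf_le_left inf_le_right
    · exact le_trans inf_le_left (le_trans inf_le_left inf_le_right)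
    · exact le_trans inf_le_right inf_le_right
  · refine le_inf (le_inf (le_inf ?_ ?_) ?_) (le_inf (le_inf ?_ ?_) ?_)
    · exact le_trans inf_le_left inf_le_left
    · exact le_trans inf_le_right inf_le_left
    · exact le_trans inf_le_left inf_le_right
    · exact le_trans inf_le_left inf_le_left
    · exact le_trans inf_le_right inf_le_left
    · exact le_trans inf_le_right inf_le_right

lemma itemSem_neg (i : Item P) (γ : Finset (fI P K)) :
    cpl (itemSem i γ) = lsup ((negItem i).map (fun j => itemSem j γ)) := by
  obtain ⟨g, ws⟩ := i
  show cpl (Iv g γ ⊓ linf (ws.map fun w => Sv (fPIL.fconj g w) γ)) = _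
  rw [DeMorganAlg.compl_inf, cpl_linf, List.map_map]
  have e1 : cpl (Iv g γ) = Sv g.fnot γ := by
    rw [Iv_def, cpl_finsetInf, Sv_def]
    rfl
  have e2 : ∀ w : fPIL P, cpl (Sv (fPIL.fconj g w) γ) = Iv (fPIL.fconj g w).fnot γ := by
    intro w
    rw [Sv_def, cpl_finsetSup, Iv_def]
    rfl
  have e3 : itemSem ((fPIL.tt : fPIL P), [g.fnot]) γ = Sv g.fnot γ := by
    show Iv fPIL.tt γ ⊓ linf [Sv (fPIL.fconj fPIL.tt g.fnot) γ] = _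
    rw [Iv_tt, top_inf_eq]
    show Sv (fPIL.fconj fPIL.tt g.fnot) γ ⊓ ⊤ = _
    rw [inf_top_eq]
    exact Sv_congr fun a => by rw [sem_fconj, sem_tt, top_inf_eq]
  have e4 : ∀ w : fPIL P, itemSem (((fPIL.fconj g w).fnot, []) : Item P) γ
      = Iv (fPIL.fconj g w).fnot γ := by
    intro w
    show Iv (fPIL.fconj g w).fnot γ ⊓ linf [] = _
    rw [linf_nil, inf_top_eq]
  show _ = lsup ((((fPIL.tt : fPIL P), [g.fnot]) :: ws.map
      (fun w => ((fPIL.fconj g w).fnot, ([] : List (fPIL P))))).map fun j => itemSem j γ)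
  rw [List.map_cons, lsup_cons, e3, List.map_map, e1]
  congr 1
  congr 1
  apply List.map_congr_left
  intro w _
  show cpl (Sv (fPIL.fconj g w) γ) = itemSem ((fPIL.fconj g w).fnot, []) γ
  rw [e2 w, e4 w]

lemma prodNeg_sem (L : List (Item P)) (γ : Finset (fI P K)) :
    lsup ((prodNeg L).map (fun i => itemSem i γ))
      = linf (L.map fun i => cpl (itemSem i γ)) := by
  induction L with
  | nil =>
    show lsup [itemSem ((fPIL.tt : fPIL P), []) γ] = ⊤
    have : itemSem ((fPIL.tt : fPIL P), []) γ = ⊤ := by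
      show Iv fPIL.tt γ ⊓ linf [] = ⊤
      rw [Iv_tt, linf_nil, inf_top_eq]
    simp [this]
  | cons i L ih =>
    show lsup ((((negItem i).product (prodNeg L)).map fun q => andC q.1 q.2).map
      (fun j => itemSem j γ)) = _
    rw [List.map_map]
    have e : ((negItem i).product (prodNeg L)).map ((fun j => itemSem j γ) ∘ fun q => andC q.1 q.2)
        = ((negItem i).product (prodNeg L)).map (fun q => itemSem q.1 γ ⊓ itemSem q.2 γ) := by
      apply List.map_congr_left
      intro q _
      exact itemSem_and q.1 q.2 γ
    rw [e, ← lsup_prod (negItem i) (prodNeg L) (fun j => itemSem j γ) (fun j => itemSem j γ),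
      ← itemSem_neg, ih]
    simp

lemma sup_lsup_swap {ι α : Type} (s : Finset ι) (l : List α) (f : ι → α → K) :
    s.sup (fun x => lsup (l.map (f x)))
      = lsup (l.map (fun a => s.sup (fun x => f x a))) := by
  induction l with
  | nil => simp
  | cons a l ih =>
    simp only [List.map_cons, lsup_cons]
    rw [← ih]
    apply le_antisymm
    · exact Finset.sup_le fun x hx => sup_le_sup
        (Finset.le_sup (f := fun x => f x a) hx)
        (Finset.le_sup (f := fun x => lsup (l.map (f x))) hx)
    · exact sup_le (Finset.sup_mono_fun fun x _ => le_sup_left)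
        (Finset.sup_mono_fun fun x _ => le_sup_right)

end NFDev4

/-- Main induction: every fPCL formula denotes a finite sup of item semantics. -/
theorem mainNF {P : Type} (ζ : fPCL P) :
    ∃ (i0 : Item P) (L : List (Item P)),
      ∀ (K : Type) [DeMorganAlg K] (γ : Finset (fI P K)), γ.Nonempty →
        ζ.sem γ = lsup (((i0 :: L).map (fun i => itemSem i γ))) := by
  induction ζ with
  | pil φ =>
    refine ⟨(φ, []), [], ?_⟩
    intro K _ γ hγ
    show γ.inf (fun a => φ.sem a) = lsup [itemSem (φ, []) γ]
    have : itemSem (φ, []) γ = Iv φ γ := by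
      show Iv φ γ ⊓ linf [] = _
      rw [linf_nil, inf_top_eq]
    simp [this, Iv_def]
  | cneg ζ ih =>
    obtain ⟨i1, L1, h1⟩ := ih
    obtain ⟨j0, M, hM⟩ : ∃ j0 M, prodNeg (i1 :: L1) = j0 :: M := by
      cases h : prodNeg (i1 :: L1) with
      | nil => exact absurd h (prodNeg_ne_nil _)
      | cons a b => exact ⟨a, b, rfl⟩
    refine ⟨j0, M, ?_⟩
    intro K _ γ hγ
    show DeMorganAlg.compl (ζ.sem γ) = _
    rw [h1 K γ hγ, ← hM, prodNeg_sem, cpl_lsup, List.map_map]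
    rfl
  | oplus ζ1 ζ2 ih1 ih2 =>
    obtain ⟨i1, L1, h1⟩ := ih1; obtain ⟨i2, L2, h2⟩ := ih2
    refine ⟨i1, L1 ++ (i2 :: L2), ?_⟩
    intro K _ γ hγ
    show ζ1.sem γ ⊔ ζ2.sem γ = _
    rw [h1 K γ hγ, h2 K γ hγ,
      show (i1 :: (L1 ++ i2 :: L2)) = (i1 :: L1) ++ (i2 :: L2) from rfl,
      List.map_append, lsup_append]
  | coal ζ1 ζ2 ih1 ih2 =>
    obtain ⟨i1, L1, h1⟩ := ih1; obtain ⟨i2, L2, h2⟩ := ih2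
    obtain ⟨j0, M, hM⟩ : ∃ j0 M,
        ((i1 :: L1).product (i2 :: L2)).map (fun q => coalC q.1 q.2) = j0 :: M := by
      cases h : ((i1 :: L1).product (i2 :: L2)).map (fun q => coalC q.1 q.2) with
      | nil =>
        rw [List.map_eq_nil_iff] at h
        exact absurd h (product_ne_nil (by simp) (by simp))
      | cons a b => exact ⟨a, b, rfl⟩
    refine ⟨j0, M, ?_⟩
    intro K _ γ hγ
    rw [sem_coal, ← hM, List.map_map]
    calc (covers γ).sup (fun q => ζ1.sem q.1 ⊓ ζ2.sem q.2)
        = (covers γ).sup (fun q => lsup (((i1 :: L1).product (i2 :: L2)).map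
            fun p => itemSem p.1 q.1 ⊓ itemSem p.2 q.2)) := by
          apply Finset.sup_congr rfl
          intro q hq
          rw [mem_covers] at hq
          rw [h1 K q.1 hq.1, h2 K q.2 hq.2.1, lsup_prod]
      _ = lsup (((i1 :: L1).product (i2 :: L2)).map
            fun p => (covers γ).sup (fun q => itemSem p.1 q.1 ⊓ itemSem p.2 q.2)) :=
          sup_lsup_swap (covers γ) _ _
      _ = lsup (((i1 :: L1).product (i2 :: L2)).map
            ((fun i => itemSem i γ) ∘ fun q => coalC q.1 q.2)) := by
          congr 1
          apply List.map_congr_left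
          intro p _
          exact coalItem p.1 p.2 γ
section NFDev5

variable {P : Type} {K : Type} [DeMorganAlg K]

lemma sem_pil (φ : fPIL P) (γ : Finset (fI P K)) :
    (fPCL.pil φ).sem γ = Iv φ γ := rfl

lemma itemSem_le_guard (G : fPIL P) (l : List (fPIL P)) (γ : Finset (fI P K)) :
    itemSem (G, l) γ ≤ Iv G γ := inf_le_left

lemma itemSem_le_factor {G : fPIL P} {l : List (fPIL P)} {w : fPIL P}
    (hw : w ∈ l) (γ : Finset (fI P K)) :
    itemSem (G, l) γ ≤ Sv (fPIL.fconj G w) γ :=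
  le_trans inf_le_right (linf_le (List.mem_map.mpr ⟨w, hw, rfl⟩))

lemma le_itemSem {G : fPIL P} {l : List (fPIL P)} {γ : Finset (fI P K)} {x : K}
    (h1 : x ≤ Iv G γ) (h2 : ∀ w ∈ l, x ≤ Sv (fPIL.fconj G w) γ) :
    x ≤ itemSem (G, l) γ := by
  refine le_inf h1 (le_linf ?_)
  intro y hy
  obtain ⟨w, hw, rfl⟩ := List.mem_map.mp hy
  exact h2 w hw

lemma itemSem_pil_eq (ψ : fPIL P) (δ : Finset (fI P K)) :
    itemSem (ψ, []) δ = Iv ψ δ := by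
  show Iv ψ δ ⊓ linf [] = _
  rw [linf_nil, inf_top_eq]

/-- closed form for the semantics of a block of pil formulas -/
lemma blockSem : ∀ (t : List (fPIL P)) (ψ : fPIL P) (γ : Finset (fI P K)),
    γ.Nonempty →
    (blockF (ψ, t)).sem γ = itemSem (fPIL.foldDisj ψ t, ψ :: t) γ := by
  intro t
  induction t with
  | nil =>
    intro ψ γ hγ
    show Iv ψ γ = _
    have e : Sv (fPIL.fconj ψ ψ) γ = Sv ψ γ :=
      Sv_congr fun a => by rw [sem_fconj, inf_idem]
    show Iv ψ γ = Iv ψ γ ⊓ (Sv (fPIL.fconj ψ ψ) γ ⊓ ⊤)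
    rw [inf_top_eq, e]
    exact (inf_eq_left.mpr (Iv_le_Sv hγ)).symm
  | cons χ t ih =>
    intro ψ γ hγ
    have hblk : blockF (ψ, χ :: t) = fPCL.coal (fPCL.pil ψ) (blockF (χ, t)) := rfl
    rw [hblk, sem_coal]
    have hcong : ∀ q ∈ covers γ,
        (fPCL.pil ψ).sem q.1 ⊓ (blockF (χ, t)).sem q.2
          = itemSem (ψ, []) q.1 ⊓ itemSem (fPIL.foldDisj χ t, χ :: t) q.2 := by
      intro q hq
      rw [mem_covers] at hq
      rw [sem_pil, ih χ q.2 hq.2.1, itemSem_pil_eq]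
    rw [Finset.sup_congr rfl hcong, coalItem (ψ, []) (fPIL.foldDisj χ t, χ :: t) γ]
    -- now massage the combined item
    set D := fPIL.foldDisj χ t with hD
    have hφD : ∀ φ ∈ χ :: t, ∀ a : fI P K, φ.sem a ≤ D.sem a := by
      intro φ hφ a
      rw [hD, sem_foldDisj]
      exact le_lsup (List.mem_map.mpr ⟨φ, hφ, rfl⟩)
    have hcoalC : coalC (ψ, ([] : List (fPIL P))) (D, χ :: t)
        = (fPIL.fdisj ψ D, ψ :: D :: (χ :: t).map (fPIL.fconj D)) := by
      simp [coalC]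
    rw [hcoalC]
    set G := fPIL.fdisj ψ D with hG
    have hfold : fPIL.foldDisj ψ (χ :: t) = G := rfl
    rw [hfold]
    -- Sv (G ∧ (D ∧ φ)) = Sv (G ∧ φ) for φ ≤ D
    have hsw : ∀ φ ∈ χ :: t,
        Sv (fPIL.fconj G (fPIL.fconj D φ)) γ = Sv (fPIL.fconj G φ) γ := by
      intro φ hφ
      apply Sv_congr
      intro a
      simp only [sem_fconj]
      rw [inf_eq_right.mpr (hφD φ hφ a)]
    apply le_antisymm
    · apply le_itemSem (itemSem_le_guard _ _ _)
      intro w hw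
      rcases List.mem_cons.mp hw with rfl | hw
      · exact itemSem_le_factor (by simp) γ
      · rw [← hsw w hw]
        exact itemSem_le_factor (by
          simp only [List.mem_cons]
          exact Or.inr (Or.inr (List.mem_map.mpr ⟨w, hw, rfl⟩))) γ
    · apply le_itemSem (itemSem_le_guard _ _ _)
      intro w hw
      rcases List.mem_cons.mp hw with rfl | hw
      · exact itemSem_le_factor (by simp) γ
      rcases List.mem_cons.mp hw with rfl | hw
      · -- w = D : bound via the factor for χ
        refine le_trans (itemSem_le_factor (l := ψ :: χ :: t) (w := χ) (by simp) γ) ?_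
        apply Sv_mono_fun
        intro a
        rw [sem_fconj, sem_fconj]
        exact inf_le_inf le_rfl (hφD χ (by simp) a)
      · obtain ⟨φ, hφ, rfl⟩ := List.mem_map.mp hw
        rw [hsw φ hφ]
        exact itemSem_le_factor (by simp [hφ]) γ

/-- congruence for blocks under mutual pointwise domination -/
lemma blockCong (ψ : fPIL P) (t : List (fPIL P)) (ψ' : fPIL P) (t' : List (fPIL P))
    (h1 : ∀ φ ∈ ψ :: t, ∃ φ' ∈ ψ' :: t', pilEquiv φ φ')
    (h2 : ∀ φ' ∈ ψ' :: t', ∃ φ ∈ ψ :: t, pilEquiv φ' φ)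
    (γ : Finset (fI P K)) (hγ : γ.Nonempty) :
    (blockF (ψ, t)).sem γ = (blockF (ψ', t')).sem γ := by
  rw [blockSem t ψ γ hγ, blockSem t' ψ' γ hγ]
  have hguard : ∀ a : fI P K,
      (fPIL.foldDisj ψ t).sem a = (fPIL.foldDisj ψ' t').sem a := by
    intro a
    rw [sem_foldDisj, sem_foldDisj]
    apply lsup_eq_of_dom
    · intro x hx
      obtain ⟨φ, hφ, rfl⟩ := List.mem_map.mp hx
      obtain ⟨φ', hφ', he⟩ := h1 φ hφ
      exact ⟨φ'.sem a, List.mem_map.mpr ⟨φ', hφ', rfl⟩, le_of_eq (he K a)⟩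
    · intro x hx
      obtain ⟨φ', hφ', rfl⟩ := List.mem_map.mp hx
      obtain ⟨φ, hφ, he⟩ := h2 φ' hφ'
      exact ⟨φ.sem a, List.mem_map.mpr ⟨φ, hφ, rfl⟩, le_of_eq (he K a)⟩
  apply le_antisymm
  · apply le_itemSem
    · exact le_trans (itemSem_le_guard _ _ _) (le_of_eq (Iv_congr hguard))
    · intro w' hw'
      obtain ⟨w, hw, he⟩ := h2 w' hw'
      refine le_trans (itemSem_le_factor hw γ) (le_of_eq (Sv_congr ?_))
      intro a
      rw [sem_fconj, sem_fconj, hguard a, he K a]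
  · apply le_itemSem
    · exact le_trans (itemSem_le_guard _ _ _) (le_of_eq (Iv_congr fun a => (hguard a).symm))
    · intro w hw
      obtain ⟨w', hw', he⟩ := h1 w hw
      refine le_trans (itemSem_le_factor hw' γ) (le_of_eq (Sv_congr ?_))
      intro a
      rw [sem_fconj, sem_fconj, hguard a, he K a]

/-- a block containing a false formula is false -/
lemma blockFF (ψ : fPIL P) (t : List (fPIL P)) (γ : Finset (fI P K))
    (hγ : γ.Nonempty) (h : ∃ φ ∈ ψ :: t, pilEquiv φ fPIL.ff) :
    (blockF (ψ, t)).sem γ = ⊥ := by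
  rw [blockSem t ψ γ hγ]
  obtain ⟨φ, hφ, hff⟩ := h
  refine le_bot_iff.mp (le_trans (itemSem_le_factor hφ γ) ?_)
  apply Sv_le
  intro a _
  rw [sem_fconj, hff K a, sem_ff, inf_bot_eq]

/-- relating itemSem to the semantics of an honest block formula -/
lemma itemSem_eq_block (i : Item P) (γ : Finset (fI P K)) (hγ : γ.Nonempty) :
    itemSem i γ = (blockF (i.1, i.2.map (fPIL.fconj i.1))).sem γ := by
  obtain ⟨g, ws⟩ := i
  rw [blockSem _ _ _ hγ]
  have hguard : ∀ a : fI P K,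
      (fPIL.foldDisj g (ws.map (fPIL.fconj g))).sem a = g.sem a := by
    intro a
    rw [sem_foldDisj]
    apply le_antisymm
    · apply lsup_le
      intro x hx
      obtain ⟨φ, hφ, rfl⟩ := List.mem_map.mp hx
      rcases List.mem_cons.mp hφ with rfl | hφ
      · exact le_rfl
      · obtain ⟨w, hw, rfl⟩ := List.mem_map.mp hφ
        rw [sem_fconj]; exact inf_le_left
    · exact le_lsup (List.mem_map.mpr ⟨g, by simp, rfl⟩)
  apply le_antisymm
  · apply le_itemSem
    · exact le_trans inf_le_left (le_of_eq (Iv_congr fun a => (hguard a).symm))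
    · intro w hw
      rcases List.mem_cons.mp hw with rfl | hw
      · refine le_trans (le_trans inf_le_left (Iv_le_Sv hγ)) (le_of_eq ?_)
        refine (Sv_congr ?_).symm
        intro a
        simp only [sem_fconj]
        rw [hguard a, inf_idem]
      · obtain ⟨w', hw', rfl⟩ := List.mem_map.mp hw
        refine le_trans (itemSem_le_factor (G := g) (l := ws) hw' γ)
          (le_of_eq (Sv_congr ?_).symm)
        intro a
        simp only [sem_fconj]
        rw [hguard a, ← inf_assoc, inf_idem]
  · apply le_itemSem
    · exact le_trans (itemSem_le_guard _ _ _) (le_of_eq (Iv_congr hguard))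
    · intro w hw
      have hmem : fPIL.fconj g w ∈ g :: ws.map (fPIL.fconj g) := by
        simp only [List.mem_cons]
        exact Or.inr (List.mem_map.mpr ⟨w, hw, rfl⟩)
      refine le_trans (itemSem_le_factor hmem γ) (le_of_eq (Sv_congr ?_))
      intro a
      simp only [sem_fconj]
      rw [hguard a, ← inf_assoc, inf_idem]

lemma sem_foldOplus (ζ : fPCL P) (l : List (fPCL P)) (γ : Finset (fI P K)) :
    (fPCL.foldOplus ζ l).sem γ = lsup ((ζ :: l).map (fun ξ => ξ.sem γ)) := by
  induction l generalizing ζ with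
  | nil => simp [fPCL.foldOplus]
  | cons ξ l ih =>
    show ζ.sem γ ⊔ (fPCL.foldOplus ξ l).sem γ = _
    rw [ih ξ]
    simp

lemma sem_pil_ff {γ : Finset (fI P K)} (hγ : γ.Nonempty) :
    (fPCL.pil (fPIL.ff : fPIL P)).sem γ = ⊥ := by
  rw [sem_pil]
  obtain ⟨a, ha⟩ := hγ
  exact le_bot_iff.mp (le_trans (Iv_le ha) (le_of_eq (sem_ff a)))

end NFDev5

lemma pclEquiv_pil_iff {P : Type} {φ ψ : fPIL P} :
    pclEquiv (fPCL.pil φ) (fPCL.pil ψ) ↔ pilEquiv φ ψ := by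
  constructor
  · intro h K _ a
    have := h K {a} (Finset.singleton_nonempty a)
    rw [sem_pil, sem_pil] at this
    simpa [Iv_def] using this
  · intro h K _ γ _
    rw [sem_pil, sem_pil]
    exact Iv_congr fun a => h K a

lemma pilEquiv_refl {P : Type} (φ : fPIL P) : pilEquiv φ φ := fun _ _ _ => rfl
lemma pilEquiv_symm {P : Type} {φ ψ : fPIL P} (h : pilEquiv φ ψ) : pilEquiv ψ φ :=
  fun K _ a => (h K a).symm
lemma pilEquiv_trans {P : Type} {φ ψ χ : fPIL P}
    (h1 : pilEquiv φ ψ) (h2 : pilEquiv ψ χ) : pilEquiv φ χ :=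
  fun K _ a => (h1 K a).trans (h2 K a)

/-- generic classical deduplication -/
lemma dedup_exists {α : Type} (r : α → α → Prop)
    (hsymm : ∀ a b, r a b → r b a) (htrans : ∀ a b c, r a b → r b c → r a c)
    (hrefl : ∀ a, r a a) :
    ∀ l : List α, ∃ l' : List α, (∀ x ∈ l', x ∈ l) ∧
      l'.Pairwise (fun x y => ¬ r x y) ∧ (∀ x ∈ l, ∃ y ∈ l', r x y) := by
  intro l
  induction l with
  | nil => exact ⟨[], by simp, List.Pairwise.nil, by simp⟩
  | cons a t ih =>
    obtain ⟨t', hsub, hpw, hdom⟩ := ih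
    by_cases h : ∃ y ∈ t', r a y
    · refine ⟨t', fun x hx => by simp [hsub x hx], hpw, ?_⟩
      intro x hx
      rcases List.mem_cons.mp hx with rfl | hx
      · exact h
      · exact hdom x hx
    · push_neg at h
      refine ⟨a :: t', ?_, ?_, ?_⟩
      · intro x hx
        rcases List.mem_cons.mp hx with rfl | hx
        · simp
        · simp [hsub x hx]
      · exact List.Pairwise.cons (fun y hy => h y hy) hpw
      · intro x hx
        rcases List.mem_cons.mp hx with rfl | hx
        · exact ⟨x, by simp, hrefl x⟩
        · obtain ⟨y, hy, hxy⟩ := hdom x hx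
          exact ⟨y, by simp [hy], hxy⟩
section PilNFSec

attribute [local instance] Classical.propDecidable

variable {P : Type}

abbrev Mono (P : Type) := Finset P × Finset P

noncomputable def monoAnd (m m' : Mono P) : Mono P := (m.1 ∪ m'.1, m.2 ∪ m'.2)

noncomputable def msetAnd (A B : Finset (Mono P)) : Finset (Mono P) :=
  (A ×ˢ B).image fun q => monoAnd q.1 q.2

noncomputable def rOr :
    Option (Finset (Mono P)) → Option (Finset (Mono P)) → Option (Finset (Mono P))
  | none, _ => none
  | some _, none => none
  | some A, some B => some (A ∪ B)

noncomputable def rAnd :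
    Option (Finset (Mono P)) → Option (Finset (Mono P)) → Option (Finset (Mono P))
  | none, x => x
  | some A, none => some A
  | some A, some B => some (msetAnd A B)

noncomputable def monoCompl (m : Mono P) : Finset (Mono P) :=
  m.1.image (fun p => ((∅ : Finset P), ({p} : Finset P)))
    ∪ m.2.image (fun p => (({p} : Finset P), (∅ : Finset P)))

noncomputable def rCompl : Option (Finset (Mono P)) → Option (Finset (Mono P))
  | none => some ∅
  | some A => A.toList.foldr (fun m acc => rAnd (some (monoCompl m)) acc) none

noncomputable def pilN : fPIL P → Option (Finset (Mono P))
  | .tt => none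
  | .port p => some {({p}, ∅)}
  | .fnot φ => rCompl (pilN φ)
  | .fdisj φ ψ => rOr (pilN φ) (pilN ψ)

variable {K : Type} [DeMorganAlg K]

local notation "cpl" => (DeMorganAlg.compl : K → K)

noncomputable def monoSem (m : Mono P) (a : fI P K) : K :=
  m.1.inf (fun p => a.1 p) ⊓ m.2.inf (fun p => cpl (a.1 p))

noncomputable def msetSem (A : Finset (Mono P)) (a : fI P K) : K :=
  A.sup (fun m => monoSem m a)

noncomputable def rSem : Option (Finset (Mono P)) → fI P K → K
  | none, _ => ⊤
  | some A, a => msetSem A a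

lemma finset_inf_toList {β : Type} (s : Finset β) (f : β → K) :
    s.inf f = linf (s.toList.map f) := by
  have h : ∀ l : List β, l.toFinset.inf f = linf (l.map f) := by
    intro l
    induction l with
    | nil => simp
    | cons a l ih => rw [List.toFinset_cons, Finset.inf_insert, ih]; rfl
  have := h s.toList
  rwa [Finset.toList_toFinset] at this

lemma finset_sup_toList {β : Type} (s : Finset β) (f : β → K) :
    s.sup f = lsup (s.toList.map f) := by
  have h : ∀ l : List β, l.toFinset.sup f = lsup (l.map f) := by
    intro l
    induction l with
    | nil => simp
    | cons a l ih => rw [List.toFinset_cons, Finset.sup_insert, ih]; rfl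
  have := h s.toList
  rwa [Finset.toList_toFinset] at this

lemma rSem_rOr (x y : Option (Finset (Mono P))) (a : fI P K) :
    rSem (rOr x y) a = rSem x a ⊔ rSem y a := by
  cases x <;> cases y <;>
    simp [rOr, rSem, msetSem, Finset.sup_union]

lemma monoSem_and (m m' : Mono P) (a : fI P K) :
    monoSem (monoAnd m m') a = monoSem m a ⊓ monoSem m' a := by
  simp only [monoSem, monoAnd, Finset.inf_union]
  ac_rfl

lemma msetSem_and (A B : Finset (Mono P)) (a : fI P K) :
    msetSem (msetAnd A B) a = msetSem A a ⊓ msetSem B a := by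
  unfold msetAnd msetSem
  rw [Finset.sup_image, Finset.sup_product_left]
  trans A.sup (fun m => monoSem m a ⊓ B.sup (fun m' => monoSem m' a))
  · apply Finset.sup_congr rfl
    intro m _
    trans B.sup (fun m' => monoSem m a ⊓ monoSem m' a)
    · apply Finset.sup_congr rfl
      intro m' _
      exact monoSem_and m m' a
    · exact (Finset.sup_inf_distrib_left _ _ _).symm
  · rw [← Finset.sup_inf_distrib_right]

lemma rSem_rAnd (x y : Option (Finset (Mono P))) (a : fI P K) :
    rSem (rAnd x y) a = rSem x a ⊓ rSem y a := by
  cases x <;> cases y <;>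
    simp [rAnd, rSem, msetSem_and]

lemma monoCompl_sem (m : Mono P) (a : fI P K) :
    msetSem (monoCompl m) a = cpl (monoSem m a) := by
  unfold monoSem monoCompl msetSem
  rw [DeMorganAlg.compl_inf, cpl_finsetInf, cpl_finsetInf, Finset.sup_union,
    Finset.sup_image, Finset.sup_image]
  congr 1
  · apply Finset.sup_congr rfl
    intro p _
    show monoSem (∅, {p}) a = _
    simp [monoSem]
  · apply Finset.sup_congr rfl
    intro p _
    show monoSem ({p}, ∅) a = _
    simp [monoSem, DeMorganAlg.compl_compl]
  -- note: second part: m.2.inf (fun p => cpl (a p)) complemented gives sup of cpl∘cpl = a p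

lemma rSem_rCompl (x : Option (Finset (Mono P))) (a : fI P K) :
    rSem (rCompl x) a = cpl (rSem x a) := by
  cases x with
  | none =>
    show msetSem ∅ a = cpl ⊤
    simp [msetSem, cpl_top]
  | some A =>
    have hfold : ∀ lm : List (Mono P),
        rSem (lm.foldr (fun m acc => rAnd (some (monoCompl m)) acc) none) a
          = linf (lm.map fun m => cpl (monoSem m a)) := by
      intro lm
      induction lm with
      | nil => simp [rSem]
      | cons m lm ih =>
        rw [List.foldr_cons, rSem_rAnd, ih, List.map_cons, linf_cons]
        congr 1
        exact monoCompl_sem m a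
    show rSem (A.toList.foldr _ none) a = cpl (msetSem A a)
    rw [hfold]
    unfold msetSem
    rw [cpl_finsetSup, finset_inf_toList]

lemma pilN_ok : ∀ φ : fPIL P,
    ∀ A, pilN φ = some A → ∀ m ∈ A, (m.1 ∪ m.2).Nonempty := by
  have hand : ∀ x y : Option (Finset (Mono P)),
      (∀ A, x = some A → ∀ m ∈ A, (m.1 ∪ m.2).Nonempty) →
      (∀ A, y = some A → ∀ m ∈ A, (m.1 ∪ m.2).Nonempty) →
      ∀ A, rAnd x y = some A → ∀ m ∈ A, (m.1 ∪ m.2).Nonempty := by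
    intro x y hx hy A hA m hm
    cases x with
    | none => exact hy A (by rwa [rAnd] at hA) m hm
    | some X =>
      cases y with
      | none =>
        have : X = A := by rwa [rAnd, Option.some_inj] at hA
        exact hx X rfl m (this ▸ hm)
      | some Y =>
        have hA' : msetAnd X Y = A := by rwa [rAnd, Option.some_inj] at hA
        rw [← hA'] at hm
        obtain ⟨q, hq, rfl⟩ := Finset.mem_image.mp hm
        have h1 := hx X rfl q.1 (Finset.mem_product.mp hq).1
        obtain ⟨z, hz⟩ := h1
        refine ⟨z, ?_⟩
        simp only [monoAnd, Finset.mem_union] at hz ⊢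
        rcases hz with hz | hz
        · exact Or.inl (Or.inl hz)
        · exact Or.inr (Or.inl hz)
  have hcompl : ∀ (m : Mono P) (m' : Mono P), m' ∈ monoCompl m → (m'.1 ∪ m'.2).Nonempty := by
    intro m m' hm'
    rcases Finset.mem_union.mp hm' with h | h <;>
      obtain ⟨p, _, rfl⟩ := Finset.mem_image.mp h <;> simp
  intro φ
  induction φ with
  | tt => intro A hA; simp [pilN] at hA
  | port p =>
    intro A hA m hm
    rw [pilN, Option.some_inj] at hA
    rw [← hA, Finset.mem_singleton] at hm
    subst hm
    simp
  | fdisj φ ψ ihφ ihψ =>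
    intro A hA m hm
    rw [pilN] at hA
    cases hφ : pilN φ with
    | none => rw [hφ, rOr] at hA; exact absurd hA (by simp)
    | some X =>
      cases hψ : pilN ψ with
      | none => rw [hφ, hψ, rOr] at hA; exact absurd hA (by simp)
      | some Y =>
        rw [hφ, hψ, rOr, Option.some_inj] at hA
        rw [← hA, Finset.mem_union] at hm
        rcases hm with hm | hm
        · exact ihφ X hφ m hm
        · exact ihψ Y hψ m hm
  | fnot φ ih =>
    intro A hA
    rw [pilN] at hA
    cases hφ : pilN φ with
    | none =>
      rw [hφ, rCompl, Option.some_inj] at hA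
      intro m hm
      rw [← hA] at hm
      simp at hm
    | some X =>
      rw [hφ] at hA
      have : ∀ lm : List (Mono P), ∀ A,
          lm.foldr (fun m acc => rAnd (some (monoCompl m)) acc) none = some A →
          ∀ m ∈ A, (m.1 ∪ m.2).Nonempty := by
        intro lm
        induction lm with
        | nil => intro A hA; simp at hA
        | cons m lm ih2 =>
          intro A hA
          rw [List.foldr_cons] at hA
          refine hand _ _ (fun B hB => ?_) ih2 A hA
          rw [Option.some_inj] at hB
          subst hB
          intro m' hm'
          exact hcompl m m' hm'
      exact this X.toList A hA

lemma pilN_sem : ∀ (φ : fPIL P) {K : Type} [DeMorganAlg K] (a : fI P K),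
    φ.sem a = rSem (pilN φ) a := by
  intro φ
  induction φ with
  | tt => intro K _ a; rfl
  | port p =>
    intro K _ a
    show a.1 p = msetSem {(({p} : Finset P), (∅ : Finset P))} a
    simp [msetSem, monoSem]
  | fnot φ ih =>
    intro K _ a
    show DeMorganAlg.compl (φ.sem a) = rSem (rCompl (pilN φ)) a
    rw [rSem_rCompl, ih]
  | fdisj φ ψ ihφ ihψ =>
    intro K _ a
    show φ.sem a ⊔ ψ.sem a = rSem (rOr (pilN φ) (pilN ψ)) a
    rw [rSem_rOr, ihφ, ihψ]

noncomputable def litList (m : Mono P) : List (fPIL P) :=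
  m.1.toList.map fPIL.port ++ m.2.toList.map (fun p => fPIL.fnot (fPIL.port p))

noncomputable def monoF (m : Mono P) : fPIL P :=
  match litList m with
  | [] => fPIL.tt
  | ψ :: l => fPIL.foldConj ψ l

lemma litList_ne_nil {m : Mono P} (h : (m.1 ∪ m.2).Nonempty) : litList m ≠ [] := by
  unfold litList
  intro hc
  rw [List.append_eq_nil_iff] at hc
  rw [List.map_eq_nil_iff, Finset.toList_eq_nil] at hc
  obtain ⟨h1, h2⟩ := hc
  rw [List.map_eq_nil_iff, Finset.toList_eq_nil] at h2
  rw [h1, h2] at h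
  simp at h

lemma monoF_isMono (m : Mono P) (h : (m.1 ∪ m.2).Nonempty) : IsFMonomial (monoF m) := by
  cases hl : litList m with
  | nil => exact absurd hl (litList_ne_nil h)
  | cons ψ l =>
    refine ⟨m.1.toList, m.2.toList, ψ, l, Finset.nodup_toList _, Finset.nodup_toList _, hl, ?_⟩
    simp only [monoF, hl]

lemma monoF_sem (m : Mono P) (a : fI P K) : (monoF m).sem a = monoSem m a := by
  have hlit : linf ((litList m).map (fun χ => χ.sem a)) = monoSem m a := by
    unfold litList monoSem
    rw [List.map_append, linf_append, List.map_map, List.map_map]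
    congr 1
    · exact (finset_inf_toList m.1 (fun p => a.1 p)).symm
    · exact (finset_inf_toList m.2 (fun p => cpl (a.1 p))).symm
  cases hl : litList m with
  | nil =>
    rw [hl] at hlit
    simp only [List.map_nil, linf_nil] at hlit
    simp only [monoF, hl]
    rw [sem_tt, hlit]
  | cons ψ l =>
    simp only [monoF, hl]
    rw [sem_foldConj, ← hl, hlit]

/-- Normal form theorem for fPIL formulas. -/
theorem pilNF (φ : fPIL P) : ∃ φ' : fPIL P, IsFpilNF φ' ∧ pilEquiv φ φ' := by
  cases hN : pilN φ with
  | none =>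
    refine ⟨fPIL.tt, Or.inl rfl, ?_⟩
    intro K _ a
    have h := pilN_sem φ (a := a)
    rw [hN] at h
    rw [sem_tt]
    exact h
  | some A =>
    have hok : ∀ m ∈ A, (m.1 ∪ m.2).Nonempty := pilN_ok φ A hN
    obtain ⟨l', hsub, hpw, hdom⟩ := dedup_exists (pilEquiv (P := P))
      (fun _ _ h => pilEquiv_symm h) (fun _ _ _ h1 h2 => pilEquiv_trans h1 h2)
      pilEquiv_refl (A.toList.map monoF)
    have hsem : ∀ (K : Type) [DeMorganAlg K] (a : fI P K),
        φ.sem a = lsup (l'.map (fun χ => χ.sem a)) := by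
      intro K _ a
      have h1 : φ.sem a = msetSem A a := by
        have h := pilN_sem φ (a := a); rwa [hN] at h
      have h2 : msetSem A a = lsup ((A.toList.map monoF).map (fun χ => χ.sem a)) := by
        unfold msetSem
        rw [finset_sup_toList, List.map_map]
        congr 1
        apply List.map_congr_left
        intro m _
        exact (monoF_sem m a).symm
      rw [h1, h2]
      apply lsup_eq_of_dom
      · intro x hx
        obtain ⟨χ, hχ, rfl⟩ := List.mem_map.mp hx
        obtain ⟨ψ, hψ, he⟩ := hdom χ hχ
        exact ⟨ψ.sem a, List.mem_map.mpr ⟨ψ, hψ, rfl⟩, le_of_eq (he K a)⟩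
      · intro x hx
        obtain ⟨χ, hχ, rfl⟩ := List.mem_map.mp hx
        exact ⟨χ.sem a, List.mem_map.mpr ⟨χ, hsub χ hχ, rfl⟩, le_rfl⟩
    cases hl' : l' with
    | nil =>
      refine ⟨fPIL.ff, Or.inr (Or.inl rfl), ?_⟩
      intro K _ a
      rw [hsem K a, hl', sem_ff]
      rfl
    | cons ψ t =>
      refine ⟨fPIL.foldDisj ψ t, Or.inr (Or.inr ⟨ψ, t, ?_, ?_, rfl⟩), ?_⟩
      · intro χ hχ
        have hχ' : χ ∈ A.toList.map monoF := hsub χ (hl' ▸ hχ)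
        obtain ⟨m, hm, rfl⟩ := List.mem_map.mp hχ'
        exact monoF_isMono m (hok m (Finset.mem_toList.mp hm))
      · exact hl' ▸ hpw
      · intro K _ a
        rw [sem_foldDisj, hsem K a, hl']

end PilNFSec
section FinalAssembly

variable {P : Type}

lemma pclEquiv_refl (ζ : fPCL P) : pclEquiv ζ ζ := fun _ _ _ _ => rfl
lemma pclEquiv_symm {ζ ξ : fPCL P} (h : pclEquiv ζ ξ) : pclEquiv ξ ζ :=
  fun K _ γ hγ => (h K γ hγ).symm
lemma pclEquiv_trans {ζ ξ χ : fPCL P} (h1 : pclEquiv ζ ξ) (h2 : pclEquiv ξ χ) :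
    pclEquiv ζ χ := fun K _ γ hγ => (h1 K γ hγ).trans (h2 K γ hγ)

/-- normalize every member of a list of fPIL formulas -/
lemma normList (l : List (fPIL P)) :
    ∃ l2 : List (fPIL P), (∀ φ' ∈ l2, IsFpilNF φ') ∧
      (∀ φ ∈ l, ∃ φ' ∈ l2, pilEquiv φ φ') ∧
      (∀ φ' ∈ l2, ∃ φ ∈ l, pilEquiv φ' φ) ∧ (l ≠ [] → l2 ≠ []) := by
  induction l with
  | nil => exact ⟨[], by simp, by simp, by simp, by simp⟩
  | cons φ l ih =>
    obtain ⟨l2, h1, h2, h3, _⟩ := ih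
    obtain ⟨φ', hφ'nf, hφ'e⟩ := pilNF φ
    refine ⟨φ' :: l2, ?_, ?_, ?_, by simp⟩
    · intro x hx
      rcases List.mem_cons.mp hx with rfl | hx
      · exact hφ'nf
      · exact h1 x hx
    · intro x hx
      rcases List.mem_cons.mp hx with rfl | hx
      · exact ⟨φ', by simp, hφ'e⟩
      · obtain ⟨y, hy, he⟩ := h2 x hx
        exact ⟨y, by simp [hy], he⟩
    · intro x hx
      rcases List.mem_cons.mp hx with rfl | hx
      · exact ⟨φ, by simp, pilEquiv_symm hφ'e⟩
      · obtain ⟨y, hy, he⟩ := h3 x hx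
        exact ⟨y, by simp [hy], he⟩

/-- every item is either false or equivalent to a good block -/
lemma itemToBlock (i : Item P) :
    (∀ (K : Type) [DeMorganAlg K] (γ : Finset (fI P K)), γ.Nonempty →
        itemSem i γ = ⊥) ∨
    ∃ b : fPIL P × List (fPIL P),
      (∀ φ ∈ b.1 :: b.2, IsFpilNF φ ∧ ¬ pclEquiv (fPCL.pil φ) (fPCL.pil fPIL.ff)) ∧
      ((b.1 :: b.2).Pairwise fun φ₁ φ₂ =>
        ¬ pclEquiv (fPCL.pil φ₁) (fPCL.pil φ₂)) ∧
      (∀ (K : Type) [DeMorganAlg K] (γ : Finset (fI P K)), γ.Nonempty →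
        itemSem i γ = (blockF b).sem γ) := by
  obtain ⟨g, ws⟩ := i
  set comps : List (fPIL P) := g :: ws.map (fPIL.fconj g) with hcomps
  obtain ⟨l2, hnf, hdom1, hdom2, hne⟩ := normList comps
  obtain ⟨l3, hsub3, hpw3, hdom3⟩ := dedup_exists (pilEquiv (P := P))
    (fun _ _ h => pilEquiv_symm h) (fun _ _ _ h1 h2 => pilEquiv_trans h1 h2)
    pilEquiv_refl l2
  -- mutual domination comps ↔ l3
  have hd13 : ∀ φ ∈ comps, ∃ φ' ∈ l3, pilEquiv φ φ' := by
    intro φ hφ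
    obtain ⟨y, hy, he⟩ := hdom1 φ hφ
    obtain ⟨z, hz, he2⟩ := hdom3 y hy
    exact ⟨z, hz, pilEquiv_trans he he2⟩
  have hd31 : ∀ φ' ∈ l3, ∃ φ ∈ comps, pilEquiv φ' φ := fun φ' hφ' =>
    hdom2 φ' (hsub3 φ' hφ')
  obtain ⟨ψ3, t3, hl3⟩ : ∃ ψ3 t3, l3 = ψ3 :: t3 := by
    cases hl : l3 with
    | nil =>
      obtain ⟨z, hz, _⟩ := hd13 g (by simp [hcomps])
      rw [hl] at hz
      simp at hz
    | cons a b => exact ⟨a, b, rfl⟩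
  have hsemblk : ∀ (K : Type) [DeMorganAlg K] (γ : Finset (fI P K)), γ.Nonempty →
      itemSem (g, ws) γ = (blockF (ψ3, t3)).sem γ := by
    intro K _ γ hγ
    rw [itemSem_eq_block (g, ws) γ hγ]
    exact blockCong g (ws.map (fPIL.fconj g)) ψ3 t3
      (by rw [← hl3]; exact hd13) (by rw [← hl3]; exact hd31) γ hγ
  by_cases hff : ∃ χ ∈ l3, pilEquiv χ fPIL.ff
  · left
    intro K _ γ hγ
    rw [hsemblk K γ hγ]
    exact blockFF ψ3 t3 γ hγ (hl3 ▸ hff)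
  · right
    push_neg at hff
    refine ⟨(ψ3, t3), ?_, ?_, hsemblk⟩
    · intro φ hφ
      have hφ3 : φ ∈ l3 := hl3 ▸ hφ
      refine ⟨hnf φ (hsub3 φ hφ3), ?_⟩
      rw [pclEquiv_pil_iff]
      exact hff φ hφ3
    · have := hl3 ▸ hpw3
      exact this.imp (fun h hc => h (pclEquiv_pil_iff.mp hc))

/-- turn a list of items into a list of good blocks with the same semantics -/
lemma itemsToBlocks (Is : List (Item P)) :
    ∃ Bs : List (fPIL P × List (fPIL P)),
      (∀ b ∈ Bs,
        (∀ φ ∈ b.1 :: b.2, IsFpilNF φ ∧ ¬ pclEquiv (fPCL.pil φ) (fPCL.pil fPIL.ff)) ∧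
        ((b.1 :: b.2).Pairwise fun φ₁ φ₂ =>
          ¬ pclEquiv (fPCL.pil φ₁) (fPCL.pil φ₂))) ∧
      (∀ (K : Type) [DeMorganAlg K] (γ : Finset (fI P K)), γ.Nonempty →
        lsup (Is.map (fun i => itemSem i γ))
          = lsup (Bs.map fun b => (blockF b).sem γ)) := by
  induction Is with
  | nil => exact ⟨[], by simp, by intro K _ γ hγ; rfl⟩
  | cons i Is ih =>
    obtain ⟨Bs, hgood, hsem⟩ := ih
    rcases itemToBlock i with hbot | ⟨b, hb1, hb2, hb3⟩
    · refine ⟨Bs, hgood, ?_⟩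
      intro K _ γ hγ
      rw [List.map_cons, lsup_cons, hbot K γ hγ, bot_sup_eq]
      exact hsem K γ hγ
    · refine ⟨b :: Bs, ?_, ?_⟩
      · intro b' hb'
        rcases List.mem_cons.mp hb' with rfl | hb'
        · exact ⟨hb1, hb2⟩
        · exact hgood b' hb'
      · intro K _ γ hγ
        rw [List.map_cons, lsup_cons, hb3 K γ hγ, List.map_cons, lsup_cons,
          hsem K γ hγ]

/-- part (i) -/
theorem pclNF (ζ : fPCL P) : ∃ ζ' : fPCL P, IsNormalForm ζ' ∧ pclEquiv ζ ζ' := by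
  obtain ⟨i0, L, hmain⟩ := mainNF ζ
  obtain ⟨Bs, hgood, hsem⟩ := itemsToBlocks (i0 :: L)
  obtain ⟨Bs', hsub', hpw', hdom'⟩ := dedup_exists
    (fun b b' : fPIL P × List (fPIL P) => pclEquiv (blockF b) (blockF b'))
    (fun _ _ h => pclEquiv_symm h) (fun _ _ _ h1 h2 => pclEquiv_trans h1 h2)
    (fun b => pclEquiv_refl (blockF b)) Bs
  cases hBs' : Bs' with
  | nil =>
    refine ⟨fPCL.pil fPIL.ff, Or.inr (Or.inl rfl), ?_⟩
    intro K _ γ hγ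
    have hBsnil : Bs = [] := by
      cases hB : Bs with
      | nil => rfl
      | cons b t =>
        obtain ⟨y, hy, _⟩ := hdom' b (by simp [hB])
        rw [hBs'] at hy
        simp at hy
    rw [hmain K γ hγ, hsem K γ hγ, hBsnil, sem_pil_ff hγ]
    rfl
  | cons B Lb =>
    refine ⟨fPCL.foldOplus (blockF B) (Lb.map blockF), Or.inr (Or.inr
      ⟨B, Lb, ?_, ?_, ?_, rfl⟩), ?_⟩
    · intro b hb
      exact (hgood b (hsub' b (hBs' ▸ hb))).1
    · intro b hb
      exact (hgood b (hsub' b (hBs' ▸ hb))).2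
    · exact hBs' ▸ hpw'
    · intro K _ γ hγ
      rw [hmain K γ hγ, hsem K γ hγ, sem_foldOplus]
      rw [show (blockF B :: (Lb.map blockF)) = (B :: Lb).map blockF from rfl,
        List.map_map]
      apply lsup_eq_of_dom
      · intro x hx
        obtain ⟨b, hb, rfl⟩ := List.mem_map.mp hx
        obtain ⟨b', hb', he⟩ := hdom' b hb
        refine ⟨((fun ξ : fPCL P => ξ.sem γ) ∘ blockF) b', List.mem_map.mpr
          ⟨b', hBs' ▸ hb', rfl⟩, le_of_eq (he K γ hγ)⟩
      · intro x hx
        obtain ⟨b', hb', rfl⟩ := List.mem_map.mp hx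
        exact ⟨(blockF b').sem γ, List.mem_map.mpr
          ⟨b', hsub' b' (hBs' ▸ hb'), rfl⟩, le_rfl⟩

end FinalAssembly
/-- (i) every fPCL formula over a finite set of ports `P` has an
equivalent normal form (equivalence over every De Morgan algebra); (ii) over any
Kleene algebra `K`, every fPCL formula has a `K`-equivalent normal form;
(iii) over any Boolean algebra `B`, every fPCL formula has a `B`-equivalent
normal form. -/
theorem fpcl_normal_form {P : Type} [Fintype P] :
    (∀ ζ : fPCL P, ∃ ζ' : fPCL P, IsNormalForm ζ' ∧ pclEquiv ζ ζ') ∧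
    (∀ (K : Type) [KleeneAlg K], ∀ ζ : fPCL P,
      ∃ ζ' : fPCL P, IsNormalForm ζ' ∧ pclEquivAt K ζ ζ') ∧
    (∀ (B : Type) [BooleanDMAlg B], ∀ ζ : fPCL P,
      ∃ ζ' : fPCL P, IsNormalForm ζ' ∧ pclEquivAt B ζ ζ') := by

  refine ⟨fun ζ => pclNF ζ, ?_, ?_⟩
  · intro K _ ζ
    obtain ⟨ζ', h1, h2⟩ := pclNF ζ
    exact ⟨ζ', h1, fun γ hγ => h2 K γ hγ⟩
  · intro B _ ζ
    obtain ⟨ζ', h1, h2⟩ := pclNF ζ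
    exact ⟨ζ', h1, fun γ hγ => h2 B γ hγ⟩
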